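/- arXiv:2005.05583 — 5 statements merged into one kernel-verified Lean document; each statement's English description precedes it below -/
import Mathlib

section
/- Let K be an algebraically closed field and let L/K be a field extension. Suppose there exist a field extension K'/K, a finitely generated commutative K'-algebra A, and an injective homomorphism of K'-algebras from K' ⊗_K L into A. Then L = K, i.e. the field extension L/K is trivial (the structure map K → L is bijective). -/
open scoped TensorProduct

set_option maxHeartbeats 1000000 in
open Polynomial in
/-- Innermost auxiliary lemma: suppose `A` is a finitely generated `K'`-algebra,
`φ : K'[X] →+* A` is compatible with the `K'`-algebra structures, `κ` is the fraction field
of `K'[X]`, `F₁` is a field which is integral over `κ`, and `ψ : A →+* F₁` is compatible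
with `φ`. If `φ X - c` is a unit of `A` for infinitely many `c : K'`, we get a
contradiction. -/
theorem aux2_stmt_0 {K' A κ F₁ : Type*} [Field K'] [CommRing A] [Algebra K' A]
    [hFT : Algebra.FiniteType K' A] [Field κ] [Algebra (Polynomial K') κ]
    [IsFractionRing (Polynomial K') κ] [Field F₁] [Algebra κ F₁] [Algebra.IsIntegral κ F₁]
    (φ : Polynomial K' →+* A)
    (hφC : φ.comp Polynomial.C = algebraMap K' A)
    (ψ : A →+* F₁)
    (hψφ : ∀ r : Polynomial K', ψ (φ r) = algebraMap κ F₁ (algebraMap (Polynomial K') κ r))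
    {T : Set K'} (hT : T.Infinite)
    (hU : ∀ c ∈ T, IsUnit (φ Polynomial.X - algebraMap K' A c)) : False := by
  classical
  letI : Algebra (Polynomial K') F₁ :=
    ((algebraMap κ F₁).comp (algebraMap (Polynomial K') κ)).toAlgebra
  haveI : IsScalarTower (Polynomial K') κ F₁ := IsScalarTower.of_algebraMap_eq'
    (show algebraMap (Polynomial K') F₁ =
      (algebraMap κ F₁).comp (algebraMap (Polynomial K') κ) from rfl)
  have hψφ' : ∀ r : Polynomial K', ψ (φ r) = algebraMap (Polynomial K') F₁ r :=
    fun r => (hψφ r).trans rfl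
  -- every element of `A` maps to an element of `F₁` with an integral multiple
  have hd : ∀ a : A, ∃ dd : Polynomial K', dd ≠ 0 ∧
      IsIntegral (Polynomial K') (algebraMap (Polynomial K') F₁ dd * ψ a) := by
    intro a
    have halg : IsAlgebraic κ (ψ a) := (Algebra.IsIntegral.isIntegral (ψ a)).isAlgebraic
    have halgR : IsAlgebraic (Polynomial K') (ψ a) :=
      (IsFractionRing.isAlgebraic_iff (Polynomial K') κ F₁).mpr halg
    obtain ⟨y, hy, hxy⟩ := halgR.exists_integral_multiple
    exact ⟨y, hy, by rwa [Algebra.smul_def] at hxy⟩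
  choose d hd0 hdint using hd
  obtain ⟨s, hs⟩ := hFT.1
  set h : Polynomial K' := ∏ a ∈ s, d a with hh
  have hh0 : h ≠ 0 := Finset.prod_ne_zero_iff.mpr fun a _ => hd0 a
  -- key integrality claim
  have key : ∀ x : A, ∃ N : ℕ,
      IsIntegral (Polynomial K') (algebraMap (Polynomial K') F₁ h ^ N * ψ x) := by
    intro x
    have hx : x ∈ Algebra.adjoin K' (s : Set A) := hs.symm ▸ Algebra.mem_top
    refine Algebra.adjoin_induction ?_ ?_ ?_ ?_ hx
    · intro a ha
      refine ⟨1, ?_⟩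
      have heq : algebraMap (Polynomial K') F₁ h ^ 1 * ψ a =
          (algebraMap (Polynomial K') F₁ (d a) * ψ a) *
            algebraMap (Polynomial K') F₁ (∏ b ∈ s.erase a, d b) := by
        rw [pow_one, hh, ← Finset.mul_prod_erase s d ha, map_mul]; ring
      rw [heq]
      exact (hdint a).mul (isIntegral_algebraMap)
    · intro c
      refine ⟨0, ?_⟩
      have e : ψ (algebraMap K' A c) = algebraMap (Polynomial K') F₁ (Polynomial.C c) := by
        rw [← hφC]; exact hψφ' _
      rw [pow_zero, one_mul, e]
      exact isIntegral_algebraMap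
    · rintro x y hx hy ⟨Nx, hNx⟩ ⟨Ny, hNy⟩
      refine ⟨Nx + Ny, ?_⟩
      have heq : algebraMap (Polynomial K') F₁ h ^ (Nx + Ny) * ψ (x + y) =
          algebraMap (Polynomial K') F₁ (h ^ Ny) *
            (algebraMap (Polynomial K') F₁ h ^ Nx * ψ x) +
          algebraMap (Polynomial K') F₁ (h ^ Nx) *
            (algebraMap (Polynomial K') F₁ h ^ Ny * ψ y) := by
        rw [map_add, map_pow, map_pow, pow_add]; ring
      rw [heq]
      exact (isIntegral_algebraMap.mul hNx).add (isIntegral_algebraMap.mul hNy)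
    · rintro x y hx hy ⟨Nx, hNx⟩ ⟨Ny, hNy⟩
      refine ⟨Nx + Ny, ?_⟩
      have heq : algebraMap (Polynomial K') F₁ h ^ (Nx + Ny) * ψ (x * y) =
          (algebraMap (Polynomial K') F₁ h ^ Nx * ψ x) *
            (algebraMap (Polynomial K') F₁ h ^ Ny * ψ y) := by
        rw [map_mul, pow_add]; ring
      rw [heq]
      exact hNx.mul hNy
  -- choose a good point c ∈ T avoiding the roots of h
  obtain ⟨c, hcT, hch⟩ : ∃ c ∈ T, ¬ h.IsRoot c := by
    obtain ⟨c, hc⟩ := Set.Infinite.nonempty (hT.diff (Polynomial.finite_setOf_isRoot hh0))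
    exact ⟨c, hc.1, hc.2⟩
  obtain ⟨w, hw⟩ := (hU c hcT).exists_right_inv
  set g : Polynomial K' := Polynomial.X - Polynomial.C c with hg
  have hg0 : g ≠ 0 := Polynomial.X_sub_C_ne_zero c
  have hgw : algebraMap (Polynomial K') F₁ g * ψ w = 1 := by
    have e : φ g = φ Polynomial.X - algebraMap K' A c := by
      rw [hg, map_sub]
      congr 1
      rw [← hφC]; rfl
    calc algebraMap (Polynomial K') F₁ g * ψ w = ψ (φ g) * ψ w := by rw [hψφ']
      _ = ψ (φ Polynomial.X - algebraMap K' A c) * ψ w := by rw [e]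
      _ = ψ ((φ Polynomial.X - algebraMap K' A c) * w) := by rw [map_mul]
      _ = 1 := by rw [hw, map_one]
  obtain ⟨N, hN⟩ := key w
  have hN1 : IsIntegral (Polynomial K')
      (algebraMap (Polynomial K') F₁ (h ^ (N + 1)) * ψ w) := by
    have heq : algebraMap (Polynomial K') F₁ (h ^ (N + 1)) * ψ w =
        algebraMap (Polynomial K') F₁ h *
          (algebraMap (Polynomial K') F₁ h ^ N * ψ w) := by
      rw [map_pow, pow_succ]; ring
    rw [heq]
    exact isIntegral_algebraMap.mul hN
  -- transfer integrality to κ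
  have hgκ : algebraMap (Polynomial K') κ g ≠ 0 := fun hc =>
    hg0 (IsFractionRing.injective (Polynomial K') κ (by simpa using hc))
  set q : κ := algebraMap (Polynomial K') κ (h ^ (N + 1)) *
    (algebraMap (Polynomial K') κ g)⁻¹ with hq
  have hqF : algebraMap κ F₁ q = algebraMap (Polynomial K') F₁ (h ^ (N + 1)) * ψ w := by
    have hinv : algebraMap κ F₁ ((algebraMap (Polynomial K') κ g)⁻¹) = ψ w := by
      rw [map_inv₀, ← IsScalarTower.algebraMap_apply]
      exact (inv_eq_of_mul_eq_one_right hgw)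
    rw [hq, map_mul, hinv, ← IsScalarTower.algebraMap_apply]
  have hIntq : IsIntegral (Polynomial K') q := by
    have h1 : IsIntegral (Polynomial K') (algebraMap κ F₁ q) := by rw [hqF]; exact hN1
    exact (isIntegral_algHom_iff (IsScalarTower.toAlgHom (Polynomial K') κ F₁)
      (algebraMap κ F₁).injective).mp h1
  obtain ⟨p, hp⟩ := IsIntegrallyClosed.isIntegral_iff.mp hIntq
  have hpg : p * g = h ^ (N + 1) := by
    apply IsFractionRing.injective (Polynomial K') κ
    rw [map_mul, hp, hq, mul_assoc, inv_mul_cancel₀ hgκ, mul_one]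
  have hev := congrArg (Polynomial.eval c) hpg
  simp only [Polynomial.eval_mul, Polynomial.eval_pow, hg, Polynomial.eval_sub,
    Polynomial.eval_X, Polynomial.eval_C, sub_self, mul_zero] at hev
  exact hch (pow_eq_zero_iff (Nat.succ_ne_zero N) |>.mp hev.symm)

set_option maxHeartbeats 1000000 in
open Polynomial in
/-- Key auxiliary lemma (Artin–Tate style): if `A` is a finitely generated algebra over a
field `K'`, `φ : K'[X] →+* A` is an injective ring homomorphism compatible with the
`K'`-algebra structures, and `φ X - c` is a unit for infinitely many `c : K'`, then we get a
contradiction. -/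
theorem aux_stmt_0 {K' : Type*} {A : Type*} [Field K'] [CommRing A] [Algebra K' A]
    [hFT : Algebra.FiniteType K' A] (φ : Polynomial K' →+* A)
    (hφC : φ.comp Polynomial.C = algebraMap K' A) (hφ : Function.Injective φ)
    {T : Set K'} (hT : T.Infinite)
    (hU : ∀ c ∈ T, IsUnit (φ Polynomial.X - algebraMap K' A c)) : False := by
  classical
  letI : Algebra (Polynomial K') A := φ.toAlgebra
  have halgRA : algebraMap (Polynomial K') A = φ := rfl
  set M0 : Submonoid (Polynomial K') := nonZeroDivisors (Polynomial K') with hM0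
  set S₀ : Submonoid A := Algebra.algebraMapSubmonoid A M0 with hS₀
  set E := Localization S₀ with hE
  set κ := FractionRing (Polynomial K') with hκ
  letI : Algebra κ E := localizationAlgebra M0 A
  have hcompat : ∀ r : Polynomial K',
      algebraMap κ E (algebraMap (Polynomial K') κ r) = algebraMap A E (φ r) := by
    intro r
    have e : algebraMap κ E =
        (IsLocalization.map E (algebraMap (Polynomial K') A)
          (show M0 ≤ S₀.comap (algebraMap (Polynomial K') A) from M0.le_comap_map) :
          κ →+* E) := rfl
    rw [e, IsLocalization.map_eq]
    rfl
  -- E is nontrivial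
  haveI : Nontrivial E := by
    refine nontrivial_of_ne 1 0 fun h10 => ?_
    have h2 : algebraMap A E 1 = algebraMap A E 0 := by simpa using h10
    obtain ⟨c, hc⟩ := (IsLocalization.eq_iff_exists S₀ E).mp h2
    obtain ⟨r, hr, hrc⟩ := c.2
    simp only [mul_one, mul_zero] at hc
    rw [← hrc] at hc
    exact absurd (hφ (by simpa [halgRA] using hc)) (nonZeroDivisors.ne_zero hr)
  -- E is of finite type over κ
  haveI hFTκE : Algebra.FiniteType κ E := by
    obtain ⟨s, hs⟩ := hFT.1
    refine ⟨⟨s.image (algebraMap A E), ?_⟩⟩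
    rw [eq_top_iff]
    rintro x -
    obtain ⟨a, m, rfl⟩ := IsLocalization.exists_mk'_eq S₀ x
    obtain ⟨r, hr, hrm⟩ := m.2
    rw [IsLocalization.mk'_eq_mul_mk'_one]
    have h1 : algebraMap A E a ∈ Algebra.adjoin κ ((s.image (algebraMap A E) : Finset E) :
        Set E) := by
      have ha : a ∈ Algebra.adjoin K' (s : Set A) := hs.symm ▸ Algebra.mem_top
      refine Algebra.adjoin_induction ?_ ?_ ?_ ?_ ha
      · intro y hy
        refine Algebra.subset_adjoin ?_
        simpa [Finset.coe_image] using Set.mem_image_of_mem _ hy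
      · intro c
        have e : algebraMap A E (algebraMap K' A c) =
            algebraMap κ E (algebraMap (Polynomial K') κ (Polynomial.C c)) := by
          rw [hcompat]
          congr 1
          rw [← hφC]; rfl
        rw [e]
        exact Subalgebra.algebraMap_mem _ _
      · intro x y _ _ hx hy
        rw [map_add]; exact add_mem hx hy
      · intro x y _ _ hx hy
        rw [map_mul]; exact mul_mem hx hy
    have h2 : IsLocalization.mk' E (1 : A) m ∈ Algebra.adjoin κ
        ((s.image (algebraMap A E) : Finset E) : Set E) := by
      have hrκ : algebraMap (Polynomial K') κ r ≠ 0 :=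
        IsFractionRing.to_map_ne_zero_of_mem_nonZeroDivisors hr
      have hmE : algebraMap A E (m : A) =
          algebraMap κ E (algebraMap (Polynomial K') κ r) := by
        rw [hcompat, ← hrm]
        rfl
      have hunit : algebraMap κ E ((algebraMap (Polynomial K') κ r)⁻¹) *
          algebraMap A E (m : A) = 1 := by
        rw [hmE, ← map_mul, inv_mul_cancel₀ hrκ, map_one]
      have hspec : IsLocalization.mk' E (1 : A) m * algebraMap A E (m : A) = 1 := by
        have := IsLocalization.mk'_spec E (1 : A) m
        simpa using this
      have heq : IsLocalization.mk' E (1 : A) m =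
          algebraMap κ E ((algebraMap (Polynomial K') κ r)⁻¹) := by
        calc IsLocalization.mk' E (1 : A) m
            = IsLocalization.mk' E (1 : A) m *
              (algebraMap A E (m : A) *
                algebraMap κ E ((algebraMap (Polynomial K') κ r)⁻¹)) := by
              rw [mul_comm (algebraMap A E (m : A)), hunit, mul_one]
          _ = (IsLocalization.mk' E (1 : A) m * algebraMap A E (m : A)) *
              algebraMap κ E ((algebraMap (Polynomial K') κ r)⁻¹) := by ring
          _ = algebraMap κ E ((algebraMap (Polynomial K') κ r)⁻¹) := by
              rw [hspec, one_mul]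
      rw [heq]
      exact Subalgebra.algebraMap_mem _ _
    exact mul_mem h1 h2
  -- pick a maximal ideal of E; the quotient F₁ is a finite extension of κ
  obtain ⟨M, hM⟩ := Ideal.exists_maximal E
  haveI := hM
  letI : Field (E ⧸ M) := Ideal.Quotient.field M
  haveI : Algebra.FiniteType κ (E ⧸ M) :=
    Algebra.FiniteType.of_surjective (Ideal.Quotient.mkₐ κ M)
      (Ideal.Quotient.mkₐ_surjective κ M)
  haveI : Module.Finite κ (E ⧸ M) := finite_of_finite_type_of_isJacobsonRing κ (E ⧸ M)
  haveI : Algebra.IsIntegral κ (E ⧸ M) := Algebra.IsIntegral.of_finite κ (E ⧸ M)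
  refine aux2_stmt_0 (κ := κ) (F₁ := E ⧸ M) φ hφC
    ((Ideal.Quotient.mk M).comp (algebraMap A E)) ?_ hT hU
  intro r
  show Ideal.Quotient.mk M (algebraMap A E (φ r)) = _
  rw [← hcompat r, Ideal.Quotient.mk_algebraMap]

/-- Let `K` be an algebraically closed field and `L/K` a field extension. If there exist a
field extension `K'/K`, a finitely generated commutative `K'`-algebra `A`, and an injective
`K'`-algebra homomorphism `K' ⊗[K] L → A`, then the extension `L/K` is trivial, i.e. the
structure map `K → L` is bijective. -/
theorem stmt_0 (K L K' A : Type*) [Field K] [IsAlgClosed K]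
    [Field L] [Algebra K L] [Field K'] [Algebra K K']
    [CommRing A] [Algebra K' A] [Algebra.FiniteType K' A]
    (f : (K' ⊗[K] L) →ₐ[K'] A) (hf : Function.Injective f) :
    Function.Bijective (algebraMap K L) := by
  refine ⟨(algebraMap K L).injective, ?_⟩
  have hint : Algebra.IsIntegral K L := by
    constructor
    intro t
    by_contra ht
    -- t is transcendental over K
    have htr : Transcendental K t := fun halg => ht halg.isIntegral
    -- build the injective ring hom `K'[X] →+* A`
    let χ₁ : (K' ⊗[K] Polynomial K) →ₐ[K] (K' ⊗[K] L) :=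
      Algebra.TensorProduct.map (AlgHom.id K K') (Polynomial.aeval t)
    have hχ₁ : Function.Injective χ₁ := by
      have hlin : χ₁.toLinearMap =
          LinearMap.lTensor K' (Polynomial.aeval t (R := K)).toLinearMap := by
        apply TensorProduct.ext'
        intro x y
        rfl
      have hinj : Function.Injective (Polynomial.aeval t (R := K)) :=
        transcendental_iff_injective.mp htr
      have h2 := Module.Flat.lTensor_preserves_injective_linearMap
        (M := K') (Polynomial.aeval t (R := K)).toLinearMap hinj
      rw [← hlin] at h2
      exact h2
    let χ : Polynomial K' →ₐ[K] (K' ⊗[K] L) :=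
      χ₁.comp (polyEquivTensor K K').toAlgHom
    have hχ : Function.Injective χ := hχ₁.comp (polyEquivTensor K K').injective
    let φ : Polynomial K' →+* A := f.toRingHom.comp χ.toRingHom
    have hφ : Function.Injective φ := hf.comp hχ
    have hχC : ∀ c : K', χ (Polynomial.C c) = algebraMap K' (K' ⊗[K] L) c := by
      intro c
      show χ₁ ((polyEquivTensor K K') (Polynomial.C c)) = _
      rw [polyEquivTensor_apply]
      simp [χ₁, Algebra.TensorProduct.algebraMap_apply]
    have hχX : χ Polynomial.X = (1 : K') ⊗ₜ[K] t := by
      show χ₁ ((polyEquivTensor K K') Polynomial.X) = _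
      rw [polyEquivTensor_apply]
      simp [χ₁]
    have hφC : φ.comp Polynomial.C = algebraMap K' A := by
      ext c
      show f (χ (Polynomial.C c)) = algebraMap K' A c
      rw [hχC, AlgHom.commutes]
    have hT : (Set.range (algebraMap K K')).Infinite :=
      Set.infinite_range_of_injective (algebraMap K K').injective
    refine aux_stmt_0 φ hφC hφ hT ?_
    rintro _ ⟨a, rfl⟩
    have hφX : φ Polynomial.X = f ((1 : K') ⊗ₜ[K] t) := by
      show f (χ Polynomial.X) = _
      rw [hχX]
    have h2 : algebraMap K' A (algebraMap K K' a) =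
        f ((1 : K') ⊗ₜ[K] algebraMap K L a) := by
      have e : ((1 : K') ⊗ₜ[K] algebraMap K L a) =
          algebraMap K' (K' ⊗[K] L) (algebraMap K K' a) := by
        rw [Algebra.TensorProduct.algebraMap_apply,
          Algebra.algebraMap_eq_smul_one (R := K) (A := L),
          Algebra.algebraMap_eq_smul_one (R := K) (A := K'), Algebra.algebraMap_self_apply,
          TensorProduct.smul_tmul]
      rw [e, AlgHom.commutes]
    have hne : t - algebraMap K L a ≠ 0 := by
      intro hc
      apply ht
      have e : t = algebraMap K L a := by linear_combination (norm := ring_nf) hc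
      rw [e]
      exact isIntegral_algebraMap
    have h1 : φ Polynomial.X - algebraMap K' A (algebraMap K K' a) =
        f ((1 : K') ⊗ₜ[K] (t - algebraMap K L a)) := by
      rw [hφX, h2, TensorProduct.tmul_sub, map_sub]
    rw [h1]
    exact (isUnit_iff_ne_zero.mpr hne).map
      (f.toRingHom.comp (Algebra.TensorProduct.includeRight :
        L →ₐ[K] K' ⊗[K] L).toRingHom)
  exact IsAlgClosed.algebraMap_bijective_of_isIntegral.2
end

section
/- Let K' be an algebraically closed field and let K ⊆ K' be a subfield which is itself algebraically closed (in particular infinite). Let A be a finitely generated commutative K'-algebra and let a ∈ A be an element such that a − t·1 is a unit of A for every t ∈ K. Then there exists a nonzero polynomial p ∈ K'[X] such that p(a) is nilpotent in A; equivalently, there exist finitely many elements a₁, …, a_r ∈ K' and an integer N ≥ 1 such that (∏_{i=1}^r (a − a_i·1))^N = 0 in A. -/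
open Polynomial

set_option maxHeartbeats 2000000
set_option synthInstance.maxHeartbeats 1000000

theorem crux (K' : Type*) [Field K'] (D : Type*) [CommRing D] [IsDomain D]
    [Algebra K' D] [Algebra.FiniteType K' D] (b : D)
    (hb : ∀ p : K'[X], p ≠ 0 → Polynomial.aeval b p ≠ 0) :
    {t : K' | IsUnit (b - algebraMap K' D t)}.Finite := by
  classical
  letI : Algebra K'[X] D := (Polynomial.aeval b).toRingHom.toAlgebra
  have halg : ∀ p : K'[X], algebraMap K'[X] D p = Polynomial.aeval b p := fun _ => rfl
  have hinj : Function.Injective (algebraMap K'[X] D) := by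
    rw [injective_iff_map_eq_zero]
    intro p hp
    by_contra h
    exact hb p h ((halg p) ▸ hp)
  haveI : IsScalarTower K' K'[X] D :=
    IsScalarTower.of_algebraMap_eq fun x => by simp [halg]
  set E := FractionRing K'[X] with hE
  set M := Algebra.algebraMapSubmonoid D (nonZeroDivisors K'[X]) with hMdef
  set S := Localization M with hS
  have hM : M ≤ nonZeroDivisors D := by
    rintro _ ⟨r, hr, rfl⟩
    refine mem_nonZeroDivisors_of_ne_zero fun h => nonZeroDivisors.ne_zero hr (hinj ?_)
    rw [h, map_zero]
  haveI : IsDomain S := IsLocalization.isDomain_of_le_nonZeroDivisors S hM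
  letI : Algebra E S := localizationAlgebra (nonZeroDivisors K'[X]) D
  haveI : IsScalarTower K'[X] D S := IsScalarTower.of_algebraMap_eq fun x => rfl
  haveI : IsScalarTower K' D S := IsScalarTower.of_algebraMap_eq fun x => rfl
  haveI : IsScalarTower K' K'[X] S := IsScalarTower.of_algebraMap_eq fun x => by
    rw [IsScalarTower.algebraMap_apply K'[X] D S, ← IsScalarTower.algebraMap_apply K' K'[X] D,
      IsScalarTower.algebraMap_apply K' D S]
  haveI : IsScalarTower K'[X] E S :=
    IsScalarTower.of_algebraMap_eq fun x => by
      rw [IsScalarTower.algebraMap_apply K'[X] D S]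
      exact (IsLocalization.map_eq (M := nonZeroDivisors K'[X]) (T := M) (Q := S)
        (g := algebraMap K'[X] D)
        ((nonZeroDivisors K'[X]).le_comap_map) x).symm
  -- `S` is of finite type over `E`
  obtain ⟨T, hT⟩ := (inferInstance : Algebra.FiniteType K' D)
  have hgen : ∀ d : D, algebraMap D S d ∈ Algebra.adjoin E ((algebraMap D S) '' ↑T) := by
    intro d
    have hd : d ∈ Algebra.adjoin K' (↑T : Set D) := hT ▸ trivial
    induction hd using Algebra.adjoin_induction with
    | mem x hx => exact Algebra.subset_adjoin ⟨x, hx, rfl⟩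
    | algebraMap k =>
        have : algebraMap D S (algebraMap K' D k)
            = algebraMap E S (algebraMap K'[X] E (Polynomial.C k)) := by
          rw [show (algebraMap K' D k) = algebraMap K'[X] D (Polynomial.C k) by
              rw [halg, Polynomial.aeval_C],
            ← IsScalarTower.algebraMap_apply K'[X] D S,
            ← IsScalarTower.algebraMap_apply K'[X] E S]
        rw [this]
        exact Subalgebra.algebraMap_mem _ _
    | add x y hx hy ihx ihy => rw [map_add]; exact add_mem ihx ihy
    | mul x y hx hy ihx ihy => rw [map_mul]; exact mul_mem ihx ihy
  haveI : Algebra.FiniteType E S := by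
    refine ⟨⟨T.image (algebraMap D S), ?_⟩⟩
    rw [eq_top_iff]
    rintro x -
    obtain ⟨⟨d, m⟩, hx⟩ := IsLocalization.surj M x
    obtain ⟨r, hr, hmr⟩ := m.2
    have h1 : algebraMap E S (IsLocalization.mk' E 1 ⟨r, hr⟩) * algebraMap D S (m : D) = 1 := by
      rw [← hmr, ← IsScalarTower.algebraMap_apply K'[X] D S,
        IsScalarTower.algebraMap_apply K'[X] E S, ← map_mul,
        IsLocalization.mk'_spec, map_one, map_one]
    have hx2 : x = algebraMap D S d * algebraMap E S (IsLocalization.mk' E 1 ⟨r, hr⟩) := by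
      have h2 : x * (algebraMap D S (m : D) * algebraMap E S (IsLocalization.mk' E 1 ⟨r, hr⟩))
          = algebraMap D S d * algebraMap E S (IsLocalization.mk' E 1 ⟨r, hr⟩) := by
        rw [← mul_assoc, hx]
      rwa [mul_comm (algebraMap D S (m : D)), h1, mul_one] at h2
    rw [hx2, Finset.coe_image]
    exact mul_mem (hgen d) (Subalgebra.algebraMap_mem _ _)
  -- pass to residue field of a maximal ideal
  obtain ⟨m, hm⟩ := Ideal.exists_maximal S
  haveI := hm
  letI L := S ⧸ m
  letI : Field L := Ideal.Quotient.field m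
  haveI : Algebra.FiniteType E L :=
    Algebra.FiniteType.of_surjective (Ideal.Quotient.mkₐ E m)
      (Ideal.Quotient.mkₐ_surjective E m)
  haveI : IsJacobsonRing E := inferInstance
  haveI : Module.Finite E L := finite_of_finite_type_of_isJacobsonRing E L
  haveI : Algebra.IsIntegral E L := Algebra.IsIntegral.of_finite E L
  haveI : IsScalarTower K'[X] E L := IsScalarTower.of_algebraMap_eq fun x => by
    rw [IsScalarTower.algebraMap_apply K'[X] S L, IsScalarTower.algebraMap_apply K'[X] E S,
      ← IsScalarTower.algebraMap_apply E S L]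
  have hinjL : Function.Injective (algebraMap K'[X] L) := by
    rw [IsScalarTower.algebraMap_eq K'[X] E L]
    exact (algebraMap E L).injective.comp (IsFractionRing.injective K'[X] E)
  -- integral denominators
  have key : ∀ z : L, ∃ y : K'[X], y ≠ 0 ∧ IsIntegral K'[X] (algebraMap K'[X] L y * z) := by
    intro z
    have hz : IsAlgebraic K'[X] z := by
      rw [IsFractionRing.isAlgebraic_iff K'[X] E L]
      exact (Algebra.IsIntegral.isIntegral z).isAlgebraic
    obtain ⟨y, hy0, hy⟩ := hz.exists_integral_multiple
    exact ⟨y, hy0, by rwa [Algebra.smul_def] at hy⟩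
  choose y hy0 hyint using key
  set f : K'[X] := T.prod fun x => y (algebraMap D L x) with hf
  have hf0 : f ≠ 0 := Finset.prod_ne_zero_iff.mpr fun x _ => hy0 _
  -- main integrality claim
  have main : ∀ d : D, ∃ n : ℕ,
      IsIntegral K'[X] (algebraMap K'[X] L (f ^ n) * algebraMap D L d) := by
    intro d
    have hd : d ∈ Algebra.adjoin K' (↑T : Set D) := hT ▸ trivial
    induction hd using Algebra.adjoin_induction with
    | mem x hx =>
        refine ⟨1, ?_⟩
        have hsplit : f = y (algebraMap D L x) * (T.erase x).prod fun z => y (algebraMap D L z) :=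
          (Finset.mul_prod_erase T _ hx).symm
        rw [pow_one, hsplit, map_mul, mul_comm (algebraMap K'[X] L (y (algebraMap D L x))),
          mul_assoc]
        exact (isIntegral_algebraMap).mul (hyint (algebraMap D L x))
    | algebraMap k =>
        refine ⟨0, ?_⟩
        rw [pow_zero, map_one, one_mul]
        have : algebraMap D L (algebraMap K' D k) = algebraMap K'[X] L (Polynomial.C k) := by
          rw [show (algebraMap K' D k) = algebraMap K'[X] D (Polynomial.C k) by
              rw [halg, Polynomial.aeval_C],
            ← IsScalarTower.algebraMap_apply K'[X] D L]
        rw [this]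
        exact isIntegral_algebraMap
    | add p q hp hq ihp ihq =>
        obtain ⟨n1, h1⟩ := ihp
        obtain ⟨n2, h2⟩ := ihq
        refine ⟨n1 + n2, ?_⟩
        have : algebraMap K'[X] L (f ^ (n1 + n2)) * algebraMap D L (p + q)
            = algebraMap K'[X] L (f ^ n2) * (algebraMap K'[X] L (f ^ n1) * algebraMap D L p)
              + algebraMap K'[X] L (f ^ n1) * (algebraMap K'[X] L (f ^ n2) * algebraMap D L q) := by
          rw [map_add, pow_add, map_mul]
          ring
        rw [this]
        exact ((isIntegral_algebraMap).mul h1).add ((isIntegral_algebraMap).mul h2)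
    | mul p q hp hq ihp ihq =>
        obtain ⟨n1, h1⟩ := ihp
        obtain ⟨n2, h2⟩ := ihq
        refine ⟨n1 + n2, ?_⟩
        have : algebraMap K'[X] L (f ^ (n1 + n2)) * algebraMap D L (p * q)
            = (algebraMap K'[X] L (f ^ n1) * algebraMap D L p)
              * (algebraMap K'[X] L (f ^ n2) * algebraMap D L q) := by
          rw [map_mul, pow_add, map_mul]
          ring
        rw [this]
        exact h1.mul h2
  -- conclusion
  refine Set.Finite.subset f.roots.toFinset.finite_toSet fun t ht => ?_
  rw [Finset.mem_coe, Multiset.mem_toFinset, Polynomial.mem_roots hf0]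
  obtain ⟨u, hu⟩ := ht
  set g : K'[X] := Polynomial.X - Polynomial.C t with hg
  have hg0 : g ≠ 0 := Polynomial.X_sub_C_ne_zero t
  have hbg : algebraMap K'[X] D g = b - algebraMap K' D t := by
    rw [halg, hg, map_sub, Polynomial.aeval_X, Polynomial.aeval_C]
  obtain ⟨n, hn⟩ := main ((u⁻¹ : Dˣ) : D)
  have huL : algebraMap K'[X] L g * algebraMap D L ((u⁻¹ : Dˣ) : D) = 1 := by
    rw [IsScalarTower.algebraMap_apply K'[X] D L, hbg, ← hu, ← map_mul, Units.mul_inv, map_one]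
  have hgE0 : algebraMap K'[X] E g ≠ 0 :=
    fun h => hg0 (IsFractionRing.injective K'[X] E (by rwa [map_zero]))
  set zE : E := algebraMap K'[X] E (f ^ n) * (algebraMap K'[X] E g)⁻¹ with hzE
  have hzL : algebraMap E L zE = algebraMap K'[X] L (f ^ n) * algebraMap D L ((u⁻¹ : Dˣ) : D) := by
    rw [hzE, map_mul, map_inv₀, ← IsScalarTower.algebraMap_apply K'[X] E L,
      ← IsScalarTower.algebraMap_apply K'[X] E L]
    congr 1
    rw [mul_comm] at huL
    exact inv_eq_of_mul_eq_one_left huL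
  have hzint : IsIntegral K'[X] zE := by
    have : IsIntegral K'[X] (algebraMap E L zE) := hzL ▸ hn
    exact (isIntegral_algebraMap_iff (algebraMap E L).injective).mp this
  obtain ⟨g', hg'⟩ := IsIntegrallyClosed.isIntegral_iff.mp hzint
  have hfact : g' * g = f ^ n := by
    apply IsFractionRing.injective K'[X] E
    rw [map_mul, hg', hzE, inv_mul_cancel_right₀ hgE0]
  have heval := congrArg (Polynomial.eval t) hfact
  rw [Polynomial.eval_mul, Polynomial.eval_pow, hg] at heval
  simp only [Polynomial.eval_sub, Polynomial.eval_X, Polynomial.eval_C, sub_self,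
    mul_zero] at heval
  rcases n with _ | n
  · rw [pow_zero] at heval
    exact absurd heval.symm one_ne_zero
  · exact pow_eq_zero_iff (Nat.succ_ne_zero n) |>.mp heval.symm

/-- Let `K'` be an algebraically closed field and `K ⊆ K'` an algebraically closed subfield.
Let `A` be a finitely generated commutative `K'`-algebra and `a ∈ A` an element such that
`a - t • 1` is a unit of `A` for every `t ∈ K`. Then there exists a nonzero polynomial
`p ∈ K'[X]` such that `p(a)` is nilpotent in `A`. -/
theorem stmt_1 (K K' A : Type*) [Field K] [IsAlgClosed K]
    [Field K'] [IsAlgClosed K'] [Algebra K K']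
    [CommRing A] [Algebra K' A] [Algebra.FiniteType K' A]
    (a : A) (ha : ∀ t : K, IsUnit (a - algebraMap K' A (algebraMap K K' t))) :
    ∃ p : Polynomial K', p ≠ 0 ∧ IsNilpotent (Polynomial.aeval a p) := by
  classical
  haveI : IsNoetherianRing A := Algebra.FiniteType.isNoetherianRing K' A
  have hfin := minimalPrimes.finite_of_isNoetherianRing A
  have hmin : ∀ P ∈ minimalPrimes A, ∃ p : K'[X], p ≠ 0 ∧ Polynomial.aeval a p ∈ P := by
    intro P hP
    haveI hprime : P.IsPrime := hP.1.1
    haveI : Algebra.FiniteType K' (A ⧸ P) :=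
      Algebra.FiniteType.of_surjective (Ideal.Quotient.mkₐ K' P)
        (Ideal.Quotient.mkₐ_surjective K' P)
    set b : A ⧸ P := Ideal.Quotient.mk P a with hb
    by_contra hcon
    push_neg at hcon
    have hbtr : ∀ p : K'[X], p ≠ 0 → Polynomial.aeval b p ≠ 0 := by
      intro p h0 hz
      refine hcon p h0 ?_
      have : Polynomial.aeval b p = Ideal.Quotient.mk P (Polynomial.aeval a p) := by
        exact Polynomial.aeval_algHom_apply (Ideal.Quotient.mkₐ K' P) a p
      rw [this] at hz
      exact Ideal.Quotient.eq_zero_iff_mem.mp hz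
    have hfinU := crux K' (A ⧸ P) b hbtr
    have hsub : Set.range (algebraMap K K') ⊆ {t : K' | IsUnit (b - algebraMap K' (A ⧸ P) t)} := by
      rintro _ ⟨t, rfl⟩
      have := (ha t).map (Ideal.Quotient.mk P)
      rwa [map_sub, show (Ideal.Quotient.mk P) (algebraMap K' A (algebraMap K K' t))
        = algebraMap K' (A ⧸ P) (algebraMap K K' t) from rfl] at this
    exact (Set.infinite_range_of_injective (algebraMap K K').injective).mono hsub hfinU
  choose p hp0 hpmem using hmin
  set s := hfin.toFinset with hs
  refine ⟨∏ P ∈ s.attach, p P.1 (hfin.mem_toFinset.mp P.2), ?_, ?_⟩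
  · exact Finset.prod_ne_zero_iff.mpr fun P _ => hp0 _ _
  · rw [← mem_nilradical, nilradical_eq_sInf, Submodule.mem_sInf]
    intro Q hQ
    haveI : Ideal.IsPrime Q := hQ
    obtain ⟨P, hPmin, hPQ⟩ := Ideal.exists_minimalPrimes_le (bot_le : (⊥ : Ideal A) ≤ Q)
    have hPmin' : P ∈ minimalPrimes A := hPmin
    have hmem : (⟨P, hfin.mem_toFinset.mpr hPmin'⟩ : {x // x ∈ s}) ∈ s.attach :=
      Finset.mem_attach _ _
    have hdvd : p P hPmin' ∣ ∏ P ∈ s.attach, p P.1 (hfin.mem_toFinset.mp P.2) :=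
      Finset.dvd_prod_of_mem _ hmem
    obtain ⟨c, hc⟩ := hdvd
    rw [hc, map_mul]
    exact hPQ (P.mul_mem_right _ (hpmem P hPmin'))
end

section
/- Let K be a field and let (A, ⊗, 𝟙) be a K-linear abelian monoidal category satisfying: (i) the unit object 𝟙 is a simple object; (ii) End(𝟙) = K; (iii) for every object X of A, the K-vector space Hom(𝟙, X) is finite-dimensional; (iv) the tensor product ⊗ is exact in each variable. Then for all objects M and N of A, the canonical K-linear map Hom(𝟙, M) ⊗_K Hom(𝟙, N) → Hom(𝟙, M ⊗ N), which sends f ⊗ g to the composite 𝟙 ≅ 𝟙 ⊗ 𝟙 →(f ⊗ g) M ⊗ N (using the unit isomorphism), is injective. -/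
open CategoryTheory CategoryTheory.MonoidalCategory CategoryTheory.Limits
open scoped TensorProduct

lemma key_lemma {K : Type*} [Field K] {C : Type*} [Category C] [Abelian C]
    [Linear K C] [MonoidalCategory C] [MonoidalPreadditive C] [MonoidalLinear K C]
    (hsimple : Simple (𝟙_ C))
    (hEnd : Function.Surjective (fun k : K => k • (𝟙 (𝟙_ C))))
    [∀ X : C, PreservesFiniteLimits (tensorLeft X)]
    [∀ X : C, PreservesFiniteLimits (tensorRight X)]
    {ι : Type*} (N : C) (s : Finset ι) :
    ∀ (M : C) (f : ι → ((𝟙_ C) ⟶ M)) (g : ι → ((𝟙_ C) ⟶ N)),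
      (∀ c : ι → K, ∑ i ∈ s, c i • g i = 0 → ∀ i ∈ s, c i = 0) →
      (∑ i ∈ s, (λ_ (𝟙_ C)).inv ≫ (f i ⊗ₘ g i)) = 0 → ∀ i ∈ s, f i = 0 := by
  classical
  haveI := hsimple
  induction s using Finset.induction_on with
  | empty => intro M f g hg hsum i hi; exact absurd hi (Finset.notMem_empty i)
  | @insert a s ha ih =>
    intro M f g hg hsum
    have hg' : ∀ c : ι → K, ∑ i ∈ s, c i • g i = 0 → ∀ i ∈ s, c i = 0 := by
      intro c hc i hi
      have h := hg (fun j => if j = a then 0 else c j) ?_ i (Finset.mem_insert_of_mem hi)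
      · simpa [ne_of_mem_of_not_mem hi ha] using h
      · simp only [Finset.sum_insert ha]
        simp only [↓reduceIte, zero_smul, zero_add]
        rw [Finset.sum_congr rfl
          (fun j hj => by rw [if_neg (ne_of_mem_of_not_mem hj ha)] :
            ∀ j ∈ s, (if j = a then 0 else c j) • g j = c j • g j)]
        exact hc
    have hfa : f a = 0 := by
      by_contra hfa
      haveI : Mono (f a) := mono_of_nonzero_from_simple hfa
      -- push to the cokernel of `f a`
      have hpush : ∑ i ∈ s, (λ_ (𝟙_ C)).inv ≫ ((f i ≫ cokernel.π (f a)) ⊗ₘ g i) = 0 := by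
        have h0 : (∑ i ∈ insert a s, (λ_ (𝟙_ C)).inv ≫ (f i ⊗ₘ g i)) ≫
            ((cokernel.π (f a)) ⊗ₘ 𝟙 N) = 0 := by rw [hsum, Limits.zero_comp]
        rw [Preadditive.sum_comp] at h0
        have hterm : ∀ i, ((λ_ (𝟙_ C)).inv ≫ (f i ⊗ₘ g i)) ≫ ((cokernel.π (f a)) ⊗ₘ 𝟙 N)
            = (λ_ (𝟙_ C)).inv ≫ ((f i ≫ cokernel.π (f a)) ⊗ₘ g i) := by
          intro i
          rw [Category.assoc, tensorHom_comp_tensorHom, Category.comp_id]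
        rw [Finset.sum_congr rfl (fun i _ => hterm i), Finset.sum_insert ha,
          cokernel.condition, MonoidalPreadditive.zero_tensor, Limits.comp_zero,
          zero_add] at h0
        exact h0
      have hzq : ∀ i ∈ s, f i ≫ cokernel.π (f a) = 0 :=
        ih (cokernel (f a)) (fun i => f i ≫ cokernel.π (f a)) g hg' hpush
      -- factor each `f i` through `f a`
      have hfac : ∀ i ∈ s, ∃ k : K, f i = k • f a := by
        intro i hi
        haveI : IsIso (Abelian.factorThruImage (f a)) := isIso_of_mono_of_epi _
        obtain ⟨k, hk⟩ := hEnd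
          (kernel.lift (cokernel.π (f a)) (f i) (hzq i hi) ≫
            inv (Abelian.factorThruImage (f a)))
        refine ⟨k, ?_⟩
        have h2 : (kernel.lift (cokernel.π (f a)) (f i) (hzq i hi) ≫
            inv (Abelian.factorThruImage (f a))) ≫ f a = f i := by
          calc (kernel.lift (cokernel.π (f a)) (f i) (hzq i hi) ≫
                inv (Abelian.factorThruImage (f a))) ≫ f a
              = kernel.lift (cokernel.π (f a)) (f i) (hzq i hi) ≫
                (inv (Abelian.factorThruImage (f a)) ≫
                  (Abelian.factorThruImage (f a) ≫ Abelian.image.ι (f a))) := by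
                rw [Abelian.image.fac, Category.assoc]
            _ = kernel.lift (cokernel.π (f a)) (f i) (hzq i hi) ≫
                Abelian.image.ι (f a) := by rw [IsIso.inv_hom_id_assoc]
            _ = f i := kernel.lift_ι _ _ _
        rw [← h2, ← hk]
        simp only [Linear.smul_comp, Category.id_comp]
      choose! k hk using hfac
      set g' : (𝟙_ C) ⟶ N := g a + ∑ i ∈ s, k i • g i with hg'def
      have hg0 : g' ≠ 0 := by
        intro h0
        have h := hg (fun j => if j = a then 1 else k j) ?_ a (Finset.mem_insert_self a s)
        · simp at h
        · simp only [Finset.sum_insert ha]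
          simp only [↓reduceIte, one_smul]
          rw [Finset.sum_congr rfl
            (fun j hj => by rw [if_neg (ne_of_mem_of_not_mem hj ha)] :
              ∀ j ∈ s, (if j = a then 1 else k j) • g j = k j • g j)]
          exact h0
      haveI : Mono g' := mono_of_nonzero_from_simple hg0
      have e1 : f a ⊗ₘ g' = f a ⊗ₘ g a + ∑ i ∈ s, f i ⊗ₘ g i := by
        rw [hg'def, MonoidalPreadditive.tensor_add, tensor_sum]
        congr 1
        refine Finset.sum_congr rfl fun i hi => ?_
        rw [hk i hi]
        simp [MonoidalCategory.tensorHom_def, Linear.smul_comp, Linear.comp_smul]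
      have htot : (λ_ (𝟙_ C)).inv ≫ (f a ⊗ₘ g') = 0 := by
        calc (λ_ (𝟙_ C)).inv ≫ (f a ⊗ₘ g')
            = ∑ i ∈ insert a s, (λ_ (𝟙_ C)).inv ≫ (f i ⊗ₘ g i) := by
              rw [e1, Preadditive.comp_add, Preadditive.comp_sum, Finset.sum_insert ha]
          _ = 0 := hsum
      have hmono : Mono (f a ⊗ₘ g') := by
        rw [MonoidalCategory.tensorHom_def]
        haveI h1 : Mono ((f a) ▷ (𝟙_ C)) := by
          have h : Mono ((tensorRight (𝟙_ C)).map (f a)) := inferInstance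
          simpa using h
        haveI h2 : Mono (M ◁ g') := by
          have h : Mono ((tensorLeft M).map g') := inferInstance
          simpa using h
        exact mono_comp _ _
      have h1 : f a ⊗ₘ g' = 0 := by
        rw [← cancel_epi (λ_ (𝟙_ C)).inv, Limits.comp_zero]
        exact htot
      have h2 : 𝟙 ((𝟙_ C) ⊗ (𝟙_ C)) = 0 := by
        rw [← cancel_mono (f a ⊗ₘ g'), Category.id_comp, h1, Limits.zero_comp]
      have h3 : 𝟙 (𝟙_ C) = 0 := by
        have := congrArg (fun x => (λ_ (𝟙_ C)).inv ≫ x ≫ (λ_ (𝟙_ C)).hom) h2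
        simpa using this
      exact id_nonzero (𝟙_ C) h3
    intro i hi
    rcases Finset.mem_insert.mp hi with rfl | hi'
    · exact hfa
    · refine ih M f g hg' ?_ i hi'
      rw [Finset.sum_insert ha, hfa, MonoidalPreadditive.zero_tensor,
        Limits.comp_zero, zero_add] at hsum
      exact hsum

/-- Let `K` be a field and `(C, ⊗, 𝟙_ C)` a `K`-linear abelian monoidal category such that:
(i) the unit object `𝟙_ C` is simple; (ii) `End (𝟙_ C) = K`; (iii) `Hom(𝟙_ C, X)` is
finite-dimensional over `K` for every `X`; (iv) the tensor product is exact in each variable.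
Then for all objects `M`, `N`, the canonical `K`-linear map
`Hom(𝟙_ C, M) ⊗[K] Hom(𝟙_ C, N) → Hom(𝟙_ C, M ⊗ N)`, sending `f ⊗ g` to the composite
`𝟙_ C ≅ 𝟙_ C ⊗ 𝟙_ C ⟶ M ⊗ N`, is injective. -/
theorem stmt_2 (K : Type*) [Field K] (C : Type*) [Category C] [Abelian C]
    [Linear K C] [MonoidalCategory C] [MonoidalPreadditive C] [MonoidalLinear K C]
    (hsimple : Simple (𝟙_ C))
    (hEnd : Function.Bijective (fun k : K => k • (𝟙 (𝟙_ C))))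
    (hfin : ∀ X : C, FiniteDimensional K ((𝟙_ C) ⟶ X))
    [∀ X : C, PreservesFiniteLimits (tensorLeft X)]
    [∀ X : C, PreservesFiniteColimits (tensorLeft X)]
    [∀ X : C, PreservesFiniteLimits (tensorRight X)]
    [∀ X : C, PreservesFiniteColimits (tensorRight X)]
    (M N : C)
    (Φ : (((𝟙_ C) ⟶ M) ⊗[K] ((𝟙_ C) ⟶ N)) →ₗ[K] ((𝟙_ C) ⟶ M ⊗ N))
    (hΦ : ∀ (f : (𝟙_ C) ⟶ M) (g : (𝟙_ C) ⟶ N),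
      Φ (f ⊗ₜ[K] g) = (λ_ (𝟙_ C)).inv ≫ (f ⊗ₘ g)) :
    Function.Injective Φ := by
  classical
  rw [injective_iff_map_eq_zero]
  intro t ht
  set ι := Module.Basis.ofVectorSpaceIndex K ((𝟙_ C) ⟶ N) with hι
  let b : Module.Basis ι K ((𝟙_ C) ⟶ N) := Module.Basis.ofVectorSpace K _
  let e : (((𝟙_ C) ⟶ M) ⊗[K] ((𝟙_ C) ⟶ N)) ≃ₗ[K] (ι →₀ ((𝟙_ C) ⟶ M)) :=
    (TensorProduct.congr (LinearEquiv.refl K _) b.repr).trans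
      (TensorProduct.finsuppScalarRight K K _ ι)
  have he : ∀ (m : (𝟙_ C) ⟶ M) (i : ι), e (m ⊗ₜ[K] b i) = Finsupp.single i m := by
    intro m i
    ext j
    simp [e, TensorProduct.finsuppScalarRight_apply_tmul_apply, Module.Basis.repr_self,
      Finsupp.single_apply]
  set d := e t with hd
  have ht' : t = ∑ i ∈ d.support, (d i) ⊗ₜ[K] (b i) := by
    apply e.injective
    rw [map_sum, Finset.sum_congr rfl (fun i _ => he (d i) i)]
    exact (Finsupp.sum_single d).symm
  have hΦt : ∑ i ∈ d.support, (λ_ (𝟙_ C)).inv ≫ ((d i) ⊗ₘ (b i)) = 0 := by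
    calc ∑ i ∈ d.support, (λ_ (𝟙_ C)).inv ≫ ((d i) ⊗ₘ (b i))
        = Φ t := by
          rw [ht', map_sum]
          exact (Finset.sum_congr rfl fun i _ => (hΦ (d i) (b i))).symm
      _ = 0 := ht
  have hli : ∀ c : ι → K, ∑ i ∈ d.support, c i • b i = 0 → ∀ i ∈ d.support, c i = 0 :=
    fun c h => linearIndependent_iff'.mp b.linearIndependent d.support c h
  have hz := key_lemma hsimple hEnd.2 N d.support M (fun i => d i) (fun i => b i) hli hΦt
  have hd0 : d = 0 := Finsupp.ext fun i => by
    by_cases h : i ∈ d.support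
    · exact hz i h
    · exact Finsupp.notMem_support_iff.mp h
  have : t = e.symm d := (e.symm_apply_apply t).symm
  rw [this, hd0, map_zero]
end

section
/- Let K be a field and let (A, ⊗, 𝟙) be a K-linear abelian monoidal category satisfying: (i) the unit object 𝟙 is a simple object; (ii) End(𝟙) = K; (iii) for every object X of A, the K-vector space Hom(𝟙, X) is finite-dimensional; (iv) the tensor product ⊗ is exact in each variable. Then for every object M of A, the canonical evaluation morphism Hom(𝟙, M) ⊗_K 𝟙 → M is a monomorphism. Here Hom(𝟙, M) ⊗_K 𝟙 denotes the direct sum of dim_K Hom(𝟙, M) copies of 𝟙, and the morphism restricts on the copy of 𝟙 indexed by a basis vector f ∈ Hom(𝟙, M) to the morphism f. -/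
open CategoryTheory CategoryTheory.MonoidalCategory CategoryTheory.Limits

attribute [local instance] CategoryTheory.Abelian.hasFiniteBiproducts

open Classical in
/-- A subobject of a finite biproduct of copies of a simple object `S` admitting no nonzero
morphism from `S` is zero. -/
lemma aux_sub_of_simple {C : Type*} [Category C] [Abelian C] (S : C) [Simple S] :
    ∀ (n : ℕ) (ι : Type) [Fintype ι], Fintype.card ι = n →
      ∀ (N : C) (h : N ⟶ ⨁ (fun _ : ι => S)), Mono h → (∀ g : S ⟶ N, g = 0) → IsZero N := by
  intro n
  induction n with
  | zero =>
    intro ι _ hcard N h hmono _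
    haveI : IsEmpty ι := Fintype.card_eq_zero_iff.mp hcard
    have hz : h = 0 := by
      apply biproduct.hom_ext
      intro j
      exact (IsEmpty.elim ‹IsEmpty ι› j)
    rw [IsZero.iff_id_eq_zero]
    haveI := hmono
    rw [← cancel_mono h, hz, zero_comp, comp_zero]
  | succ n ih =>
    intro ι _ hcard N h hmono hz
    haveI : Nonempty ι := Fintype.card_pos_iff.mp (by omega)
    obtain ⟨i₀⟩ := ‹Nonempty ι›
    haveI := hmono
    set q : N ⟶ S := h ≫ biproduct.π _ i₀ with hq
    -- the factoring construction: any map into the biproduct killing component i₀ factors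
    -- monomorphically through the sub-biproduct indexed by {i // ¬ i = i₀}
    have card' : Fintype.card {i : ι // ¬ i = i₀} = n := by
      have := Fintype.card_subtype_compl (fun i : ι => i = i₀)
      simp only [Fintype.card_subtype_eq] at this
      simpa [this, hcard] using by omega
    have factor : ∀ (P : C) (g : P ⟶ ⨁ (fun _ : ι => S)), Mono g →
        g ≫ biproduct.π _ i₀ = 0 →
        Mono (biproduct.lift (f := fun _ : {i : ι // ¬ i = i₀} => S)
          (fun j => g ≫ biproduct.π _ j.1)) := by
      intro P g hg hzero
      haveI := hg
      have hfac : biproduct.lift (f := fun _ : {i : ι // ¬ i = i₀} => S)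
          (fun j => g ≫ biproduct.π _ j.1) ≫
            biproduct.fromSubtype (fun _ : ι => S) (fun i => ¬ i = i₀) = g := by
        apply biproduct.hom_ext
        intro j
        erw [Category.assoc, biproduct.fromSubtype_π]
        by_cases hj : ¬ j = i₀
        · erw [dif_pos hj]
          exact biproduct.lift_π _ _
        · push_neg at hj
          subst hj
          erw [dif_neg (by simp), comp_zero, hzero]
      exact mono_of_mono_fac hfac
    by_cases hq0 : q = 0
    · -- h itself factors through the smaller biproduct
      have := factor N h hmono hq0
      exact ih {i : ι // ¬ i = i₀} card' N _ this hz
    · -- q is epi; its kernel is zero by induction; hence q is an iso, contradiction with hz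
      haveI hepi : Epi q := epi_of_nonzero_to_simple hq0
      have hker0 : IsZero (kernel q) := by
        refine ih {i : ι // ¬ i = i₀} card' (kernel q) _
          (factor _ (kernel.ι q ≫ h) inferInstance ?_) ?_
        · rw [Category.assoc, ← hq, kernel.condition]
        · intro g
          have hzk : g ≫ kernel.ι q = 0 := hz _
          rw [← cancel_mono (kernel.ι q), hzk, zero_comp]
      haveI hmonoq : Mono q := by
        apply Preadditive.mono_of_cancel_zero
        intro P g hg
        rw [← kernel.lift_ι q g hg, hker0.eq_of_tgt (kernel.lift q g hg) 0, zero_comp]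
      haveI : IsIso q := isIso_of_mono_of_epi q
      exfalso
      apply id_nonzero S
      rw [← IsIso.inv_hom_id q, hz (inv q), zero_comp]

/-- Let `K` be a field and `(C, ⊗, 𝟙_ C)` a `K`-linear abelian monoidal category such that:
(i) the unit object `𝟙_ C` is simple; (ii) `End (𝟙_ C) = K`; (iii) `Hom(𝟙_ C, X)` is
finite-dimensional over `K` for every `X`; (iv) the tensor product is exact in each variable.
Then for every object `M`, the canonical evaluation morphism
`Hom(𝟙_ C, M) ⊗_K 𝟙_ C → M` is a monomorphism.  Here `Hom(𝟙_ C, M) ⊗_K 𝟙_ C` is realized as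
the biproduct of copies of `𝟙_ C` indexed by a basis `b` of the finite-dimensional vector
space `Hom(𝟙_ C, M)`, and the morphism restricts on the copy indexed by `i` to `b i`. -/
theorem stmt_3 (K : Type*) [Field K] (C : Type*) [Category C] [Abelian C]
    [Linear K C] [MonoidalCategory C] [MonoidalPreadditive C] [MonoidalLinear K C]
    (hsimple : Simple (𝟙_ C))
    (hEnd : Function.Bijective (fun k : K => k • (𝟙 (𝟙_ C))))
    (hfin : ∀ X : C, FiniteDimensional K ((𝟙_ C) ⟶ X))
    [∀ X : C, PreservesFiniteLimits (tensorLeft X)]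
    [∀ X : C, PreservesFiniteColimits (tensorLeft X)]
    [∀ X : C, PreservesFiniteLimits (tensorRight X)]
    [∀ X : C, PreservesFiniteColimits (tensorRight X)]
    (M : C) (ι : Type) [Fintype ι] (b : Module.Basis ι K ((𝟙_ C) ⟶ M)) :
    Mono (biproduct.desc (f := fun _ : ι => 𝟙_ C) (fun i => b i)) := by
  haveI := hsimple
  set f : (⨁ fun _ : ι => 𝟙_ C) ⟶ M := biproduct.desc (fun i => b i) with hf
  -- every morphism from the unit to the kernel of `f` is zero
  have key : ∀ g : 𝟙_ C ⟶ kernel f, g = 0 := by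
    intro g
    set c : 𝟙_ C ⟶ ⨁ fun _ : ι => 𝟙_ C := g ≫ kernel.ι f with hc
    -- components of `c` are scalars
    choose k hk using fun i => hEnd.surjective (c ≫ biproduct.π _ i)
    have hk' : ∀ i, k i • 𝟙 (𝟙_ C) = c ≫ biproduct.π (fun _ : ι => 𝟙_ C) i := fun i => hk i
    have hcf : c ≫ f = 0 := by
      rw [hc, Category.assoc, kernel.condition, comp_zero]
    have hlift : c = biproduct.lift (fun i => c ≫ biproduct.π _ i) := by
      apply biproduct.hom_ext; intro j; simp
    have hsum : ∑ i, k i • b i = 0 := by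
      have := hcf
      rw [hlift, hf, biproduct.lift_desc] at this
      calc ∑ i, k i • b i = ∑ i, (k i • 𝟙 (𝟙_ C)) ≫ b i := by
            simp [Linear.smul_comp]
        _ = 0 := by
            rw [← this]
            refine Finset.sum_congr rfl fun i _ => ?_
            rw [hk' i]
    have hk0 : ∀ i, k i = 0 := by
      have := Fintype.linearIndependent_iff.mp b.linearIndependent k hsum
      exact this
    have hc0 : c = 0 := by
      apply biproduct.hom_ext
      intro j
      rw [← hk' j, hk0 j, zero_smul, zero_comp]
    rw [← cancel_mono (kernel.ι f), ← hc, hc0, zero_comp]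
  have hker : IsZero (kernel f) :=
    aux_sub_of_simple (𝟙_ C) (Fintype.card ι) ι rfl (kernel f) (kernel.ι f)
      inferInstance key
  apply Preadditive.mono_of_cancel_zero
  intro P g hg
  rw [← kernel.lift_ι f g hg, hker.eq_of_tgt (kernel.lift f g hg) 0, zero_comp]
end

section
/- Let 𝐀 and 𝐁 be abelian categories and let F : 𝐀 → 𝐁 be an exact and fully faithful functor. Assume that every object of 𝐀 has finite length, and that F(M) is a simple object of 𝐁 for every simple object M of 𝐀. Then the essential image of F is closed under subquotients: if X is an object of 𝐁 isomorphic to F(N) for some N in 𝐀, then every subobject of X and every quotient object of X is isomorphic to F(N') for some object N' of 𝐀. -/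
open CategoryTheory CategoryTheory.Limits

/-- An object of an abelian category has finite length if it admits a finite filtration with
simple subquotients: either it is zero, or it admits a simple subobject whose cokernel has
finite length. -/
inductive HasFiniteLength {A : Type*} [Category A] [Abelian A] : A → Prop
  | of_isZero {X : A} (h : IsZero X) : HasFiniteLength X
  | of_simple_subobject {S X : A} (hS : Simple S) (f : S ⟶ X) (hf : Mono f)
      (h : HasFiniteLength (cokernel f)) : HasFiniteLength X

/-- Key lemma: subobjects of objects in the essential image of `F` lie in the essential
image of `F`, proved by induction on a finite-length filtration. -/
lemma aux_sub_mem {A B : Type*} [Category A] [Category B] [Abelian A] [Abelian B]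
    (F : A ⥤ B) [F.Full] [F.Faithful]
    [PreservesFiniteLimits F] [PreservesFiniteColimits F]
    (hsimple : ∀ X : A, Simple X → Simple (F.obj X)) :
    ∀ (N : A), HasFiniteLength N → ∀ (Y : B) (f : Y ⟶ F.obj N), Mono f →
      ∃ N' : A, Nonempty (Y ≅ F.obj N') := by
  intro N hN
  induction hN with
  | @of_isZero Z h =>
    intro Y f hf
    haveI := hf
    exact ⟨Z, ⟨(IsZero.of_mono f (F.map_isZero h)).iso (F.map_isZero h)⟩⟩
  | @of_simple_subobject S N hS g hg hcok IH =>
    intro Y f hf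
    haveI := hg
    haveI := hf
    haveI : Simple (F.obj S) := hsimple S hS
    have hcomp : cokernel.π (F.map g) ≫ cokernelComparison g F = F.map (cokernel.π g) :=
      π_comp_cokernelComparison g F
    -- the intersection of `Y` with `F.obj S` inside `F.obj N`
    have hK' : (kernel.ι (f ≫ F.map (cokernel.π g)) ≫ f) ≫ cokernel.π (F.map g) = 0 := by
      rw [← cancel_mono (cokernelComparison g F)]
      simp only [Category.assoc, zero_comp]
      rw [hcomp]
      exact kernel.condition (f ≫ F.map (cokernel.π g))
    have hm_fac : Abelian.monoLift (F.map g) _ hK' ≫ F.map g =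
        kernel.ι (f ≫ F.map (cokernel.π g)) ≫ f := Abelian.monoLift_comp _ _ hK'
    haveI : Mono (Abelian.monoLift (F.map g) _ hK') := by
      haveI : Mono (Abelian.monoLift (F.map g) _ hK' ≫ F.map g) := by
        rw [hm_fac]; infer_instance
      exact mono_of_mono _ (F.map g)
    by_cases hm0 : Abelian.monoLift (F.map g) _ hK' = 0
    · -- `Y ∩ F S = 0` : then `Y` embeds into `F (cokernel g)`
      have hι : kernel.ι (f ≫ F.map (cokernel.π g)) = 0 := by
        rw [← cancel_mono f, zero_comp, ← hm_fac, hm0, zero_comp]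
      haveI : Mono (f ≫ F.map (cokernel.π g)) := Preadditive.mono_of_kernel_zero hι
      exact IH Y (f ≫ F.map (cokernel.π g)) inferInstance
    · -- `F S ⊆ Y`
      haveI : IsIso (Abelian.monoLift (F.map g) _ hK') := isIso_of_mono_of_nonzero hm0
      obtain ⟨w, hwmono, hwf⟩ : ∃ w : F.obj S ⟶ Y, Mono w ∧ w ≫ f = F.map g := by
        refine ⟨inv (Abelian.monoLift (F.map g) _ hK') ≫
          kernel.ι (f ≫ F.map (cokernel.π g)), inferInstance, ?_⟩
        rw [Category.assoc, IsIso.inv_comp_eq]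
        exact hm_fac.symm
      haveI := hwmono
      have hwd : w ≫ f ≫ F.map (cokernel.π g) = 0 := by
        rw [← Category.assoc, hwf, ← F.map_comp, cokernel.condition, F.map_zero]
      have hd : cokernel.π w ≫ cokernel.desc w (f ≫ F.map (cokernel.π g)) hwd =
          f ≫ F.map (cokernel.π g) := cokernel.π_desc _ _ _
      -- the induced map `Y / F S ⟶ F (cokernel g)` is mono
      haveI : Mono (cokernel.desc w (f ≫ F.map (cokernel.π g)) hwd) := by
        apply Preadditive.mono_of_cancel_zero
        intro T a ha
        obtain ⟨T', p, hp, b, hb⟩ :=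
          CategoryTheory.surjective_up_to_refinements_of_epi (cokernel.π w) a
        haveI := hp
        have h2 : b ≫ f ≫ F.map (cokernel.π g) = 0 := by
          rw [← hd, ← Category.assoc, ← hb, Category.assoc, ha, comp_zero]
        have hbf : (b ≫ f) ≫ cokernel.π (F.map g) = 0 := by
          rw [← cancel_mono (cokernelComparison g F)]
          simp only [Category.assoc, zero_comp]
          rw [hcomp]
          simpa using h2
        have hs : Abelian.monoLift (F.map g) _ hbf ≫ F.map g = b ≫ f :=
          Abelian.monoLift_comp _ _ hbf
        have hb' : b = Abelian.monoLift (F.map g) _ hbf ≫ w := by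
          rw [← cancel_mono f, Category.assoc, hwf, hs]
        have hpa : p ≫ a = 0 := by
          rw [hb, hb', Category.assoc, cokernel.condition, comp_zero]
        rw [← cancel_epi p, hpa, comp_zero]
      obtain ⟨Q, ⟨e⟩⟩ := IH (cokernel w) (cokernel.desc w (f ≫ F.map (cokernel.π g)) hwd)
        inferInstance
      obtain ⟨q, hq⟩ : ∃ q : Q ⟶ cokernel g,
          F.map q = e.inv ≫ cokernel.desc w (f ≫ F.map (cokernel.π g)) hwd :=
        ⟨F.preimage _, F.map_preimage _⟩
      haveI : Mono q := by
        apply F.mono_of_mono_map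
        rw [hq]
        infer_instance
      -- now build the pullback `N' = N ×_{cokernel g} Q` in `A`
      have cond : g ≫ cokernel.π g = (0 : S ⟶ Q) ≫ q := by simp [cokernel.condition]
      have hsf : pullback.lift g (0 : S ⟶ Q) cond ≫ pullback.fst (cokernel.π g) q = g :=
        pullback.lift_fst _ _ _
      have hss : pullback.lift g (0 : S ⟶ Q) cond ≫ pullback.snd (cokernel.π g) q = 0 :=
        pullback.lift_snd _ _ _
      haveI : Mono (pullback.lift g (0 : S ⟶ Q) cond) := by
        haveI : Mono (pullback.lift g (0 : S ⟶ Q) cond ≫ pullback.fst (cokernel.π g) q) := by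
          rw [hsf]; infer_instance
        exact mono_of_mono _ (pullback.fst (cokernel.π g) q)
      -- exactness of `0 ⟶ S ⟶ N' ⟶ Q ⟶ 0` in `A`
      have hexA : (ShortComplex.mk (pullback.lift g (0 : S ⟶ Q) cond)
          (pullback.snd (cokernel.π g) q) hss).Exact := by
        apply ShortComplex.exact_of_f_is_kernel
        refine KernelFork.IsLimit.ofι' _ _ ?_
        intro T k hk
        have hkc : (k ≫ pullback.fst (cokernel.π g) q) ≫ cokernel.π g = 0 := by
          rw [Category.assoc, pullback.condition, ← Category.assoc, hk, zero_comp]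
        refine ⟨Abelian.monoLift g _ hkc, ?_⟩
        apply pullback.hom_ext
        · rw [Category.assoc, hsf, Abelian.monoLift_comp]
        · rw [Category.assoc, hss, comp_zero, hk]
      have hexB := hexA.map F
      -- the comparison map `t : Y ⟶ F.obj N'`
      have hcomm : f ≫ F.map (cokernel.π g) = (cokernel.π w ≫ e.hom) ≫ F.map q := by
        rw [hq, Category.assoc, Iso.hom_inv_id_assoc, hd]
      obtain ⟨t, ht1, ht2⟩ : ∃ t : Y ⟶ F.obj (pullback (cokernel.π g) q),
          t ≫ F.map (pullback.fst (cokernel.π g) q) = f ∧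
          t ≫ F.map (pullback.snd (cokernel.π g) q) = cokernel.π w ≫ e.hom := by
        refine ⟨pullback.lift f (cokernel.π w ≫ e.hom) hcomm ≫
          (PreservesPullback.iso F (cokernel.π g) q).inv, ?_, ?_⟩
        · rw [Category.assoc, PreservesPullback.iso_inv_fst, pullback.lift_fst]
        · rw [Category.assoc, PreservesPullback.iso_inv_snd, pullback.lift_snd]
      have hsq : w ≫ t = F.map (pullback.lift g (0 : S ⟶ Q) cond) := by
        rw [← cancel_mono ((PreservesPullback.iso F (cokernel.π g) q).hom)]
        apply pullback.hom_ext
        · simp only [Category.assoc, PreservesPullback.iso_hom_fst]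
          rw [ht1, ← F.map_comp, hsf, hwf]
        · simp only [Category.assoc, PreservesPullback.iso_hom_snd]
          rw [ht2, ← F.map_comp, hss, F.map_zero, cokernel.condition_assoc, zero_comp]
      -- `t` is mono
      haveI : Mono t := by
        haveI : Mono (t ≫ F.map (pullback.fst (cokernel.π g) q)) := by
          rw [ht1]; infer_instance
        exact mono_of_mono t (F.map (pullback.fst (cokernel.π g) q))
      -- `t` is epi, by the diagram lemma applied to the two short exact sequences
      haveI : Epi t := by
        have h := CategoryTheory.Abelian.epi_of_epi_of_epi_of_epi
          (R₁ := ComposableArrows.mk₂ w (cokernel.π w ≫ e.hom))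
          (R₂ := ((ShortComplex.mk (pullback.lift g (0 : S ⟶ Q) cond)
            (pullback.snd (cokernel.π g) q) hss).map F).toComposableArrows)
          (ComposableArrows.homMk₂ (𝟙 _) t (𝟙 _)
            (by exact hsq.trans (Category.id_comp _).symm)
            (by exact (Category.comp_id _).trans ht2.symm))
          hexB.exact_toComposableArrows
          (by exact (inferInstance : Epi (cokernel.π w ≫ e.hom)))
          (by exact (inferInstance : Epi (𝟙 (F.obj S)))) (by exact (inferInstance : Epi (𝟙 (F.obj Q))))
        exact h
      haveI : IsIso t := isIso_of_mono_of_epi t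
      exact ⟨pullback (cokernel.π g) q, ⟨asIso t⟩⟩

/-- Let `𝐀`, `𝐁` be abelian categories and `F : 𝐀 ⥤ 𝐁` an exact, fully faithful functor.
Assume every object of `𝐀` has finite length and that `F` sends simple objects to simple
objects.  Then the essential image of `F` is closed under subquotients: if `X ≅ F N` for
some `N`, then every subobject and every quotient object of `X` lies in the essential image
of `F`. -/
theorem stmt_5 {A B : Type*} [Category A] [Category B] [Abelian A] [Abelian B]
    (F : A ⥤ B) [F.Full] [F.Faithful]
    [PreservesFiniteLimits F] [PreservesFiniteColimits F]
    (hlen : ∀ X : A, HasFiniteLength X)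
    (hsimple : ∀ X : A, Simple X → Simple (F.obj X))
    (X : B) (hX : ∃ N : A, Nonempty (X ≅ F.obj N)) :
    (∀ (Y : B) (f : Y ⟶ X), Mono f → ∃ N' : A, Nonempty (Y ≅ F.obj N')) ∧
    (∀ (Y : B) (f : X ⟶ Y), Epi f → ∃ N' : A, Nonempty (Y ≅ F.obj N')) := by
  obtain ⟨N, ⟨x⟩⟩ := hX
  constructor
  · intro Y f hf
    haveI := hf
    exact aux_sub_mem F hsimple N (hlen N) Y (f ≫ x.hom) inferInstance
  · intro Y f hf
    haveI := hf
    obtain ⟨N'', ⟨e2⟩⟩ := aux_sub_mem F hsimple N (hlen N) (kernel f)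
      (kernel.ι f ≫ x.hom) inferInstance
    obtain ⟨g', hg'⟩ : ∃ g' : N'' ⟶ N, F.map g' = e2.inv ≫ kernel.ι f ≫ x.hom :=
      ⟨F.preimage _, F.map_preimage _⟩
    have hcomm : kernel.ι f ≫ x.hom = e2.hom ≫ F.map g' := by
      rw [hg', Iso.hom_inv_id_assoc]
    refine ⟨cokernel g', ⟨?_⟩⟩
    calc Y ≅ cokernel (kernel.ι f) :=
          (IsColimit.coconePointUniqueUpToIso
            (Abelian.epiIsCokernelOfKernel _ (kernelIsKernel f)) (colimit.isColimit _))
      _ ≅ cokernel (F.map g') := cokernel.mapIso _ _ e2 x hcomm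
      _ ≅ F.obj (cokernel g') := (PreservesCokernel.iso F g').symm
end
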